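/- Let n ≥ 1 and let (e_1, …, e_n) be an orthonormal basis of V. Then the trace of the linear endomorphism c(e_1) ∘ c(e_2) ∘ ⋯ ∘ c(e_n) of ⋀V is 0. (This is the statement that the supertrace of the identity vanishes, which underlies the paper's identity Swres[(D²)^{-(n−2)/2}] = 0.) -/

import Mathlib

open RealInnerProductSpace

section Aux

variable {V : Type*} [NormedAddCommGroup V] [InnerProductSpace ℝ V]

local notation "Q0" => (0 : QuadraticForm ℝ V)

noncomputable def cOp (v : V) : Module.End ℝ (ExteriorAlgebra ℝ V) :=
  LinearMap.mulLeft ℝ (ExteriorAlgebra.ι ℝ v)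
    - CliffordAlgebra.contractLeft (Q := Q0) (innerₛₗ ℝ v)

noncomputable def parOp : Module.End ℝ (ExteriorAlgebra ℝ V) :=
  (CliffordAlgebra.involute (Q := Q0)).toLinearMap

lemma involute_contract (d : Module.Dual ℝ V) (x : ExteriorAlgebra ℝ V) :
    CliffordAlgebra.involute (CliffordAlgebra.contractLeft (Q := Q0) d x)
      = - CliffordAlgebra.contractLeft (Q := Q0) d (CliffordAlgebra.involute x) := by
  induction x using CliffordAlgebra.left_induction with
  | algebraMap r =>
      simp [CliffordAlgebra.contractLeft_algebraMap]
  | add x y hx hy =>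
      simp only [map_add, hx, hy, neg_add]
  | ι_mul x m hx =>
      rw [CliffordAlgebra.contractLeft_ι_mul, map_sub, map_smul, map_mul,
        CliffordAlgebra.involute_ι, hx, map_mul, CliffordAlgebra.involute_ι]
      simp only [neg_mul, map_neg, CliffordAlgebra.contractLeft_ι_mul, mul_neg, neg_neg, neg_sub]

lemma parOp_sq : (parOp (V := V)) * parOp = 1 := by
  refine LinearMap.ext fun x => ?_
  simp [parOp, CliffordAlgebra.involute_involute, Module.End.mul_apply]

lemma parOp_anticomm (v : V) : parOp * cOp v = -(cOp v * parOp) := by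
  refine LinearMap.ext fun x => ?_
  simp only [cOp, parOp, Module.End.mul_apply, LinearMap.sub_apply, LinearMap.neg_apply,
    LinearMap.mulLeft_apply, AlgHom.toLinearMap_apply, map_sub, map_mul,
    CliffordAlgebra.involute_ι, involute_contract, neg_mul, neg_sub, sub_neg_eq_add]
  abel

lemma cOp_mul_cOp (v w : V) (x : ExteriorAlgebra ℝ V) :
    (cOp v * cOp w) x + (cOp w * cOp v) x = -((⟪v,w⟫ + ⟪w,v⟫) • x) := by
  simp only [cOp, Module.End.mul_apply, LinearMap.sub_apply, LinearMap.mulLeft_apply,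
    map_sub, CliffordAlgebra.contractLeft_ι_mul, innerₛₗ_apply_apply, mul_sub,
    show (CliffordAlgebra.ι Q0 : V →ₗ[ℝ] _) = ExteriorAlgebra.ι ℝ from rfl]
  have h1 : ExteriorAlgebra.ι ℝ v * (ExteriorAlgebra.ι ℝ w * x)
      = -(ExteriorAlgebra.ι ℝ w * (ExteriorAlgebra.ι ℝ v * x)) := by
    apply eq_neg_of_add_eq_zero_left
    rw [← mul_assoc, ← mul_assoc, ← add_mul]
    rw [CliffordAlgebra.ι_mul_ι_add_swap (Q := Q0) v w]
    simp [QuadraticMap.polar]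
  have h2 :
      (CliffordAlgebra.contractLeft (Q := Q0) (innerₛₗ ℝ v))
        ((CliffordAlgebra.contractLeft (Q := Q0) (innerₛₗ ℝ w)) x)
      = -((CliffordAlgebra.contractLeft (Q := Q0) (innerₛₗ ℝ w))
        ((CliffordAlgebra.contractLeft (Q := Q0) (innerₛₗ ℝ v)) x)) :=
    CliffordAlgebra.contractLeft_comm _ _ _
  rw [h1, h2, add_smul, neg_add]
  abel


lemma cOp_anticomm {v w : V} (h : ⟪v,w⟫ = 0) : cOp w * cOp v = -(cOp v * cOp w) := by
  refine LinearMap.ext fun x => ?_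
  have h2 : ⟪w,v⟫ = 0 := by rw [real_inner_comm]; exact h
  have := cOp_mul_cOp v w x
  rw [h, h2, add_zero, zero_smul, neg_zero] at this
  simpa using eq_neg_of_add_eq_zero_right this

lemma cOp_sq {v : V} (h : ⟪v,v⟫ = 1) : cOp v * cOp v = -1 := by
  refine LinearMap.ext fun x => ?_
  simp only [cOp, Module.End.mul_apply, LinearMap.sub_apply, LinearMap.mulLeft_apply,
    map_sub, CliffordAlgebra.contractLeft_ι_mul, innerₛₗ_apply_apply, mul_sub, h,
    CliffordAlgebra.contractLeft_contractLeft, one_smul, LinearMap.neg_apply,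
    Module.End.one_apply, ← mul_assoc, ExteriorAlgebra.ι_sq_zero, zero_mul,
    show (CliffordAlgebra.ι Q0 : V →ₗ[ℝ] _) = ExteriorAlgebra.ι ℝ from rfl]
  abel

lemma cOp_parOp (v : V) : cOp v * parOp = -(parOp * cOp v) := by
  rw [parOp_anticomm v, neg_neg]

lemma prod_anticomm (g : Module.End ℝ (ExteriorAlgebra ℝ V))
    (L : List (Module.End ℝ (ExteriorAlgebra ℝ V))) (h : ∀ a ∈ L, a * g = -(g * a)) :
    L.prod * g = (-1 : ℝ)^L.length • (g * L.prod) := by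
  induction L with
  | nil => simp
  | cons a t ih =>
      have ha := h a (List.mem_cons_self)
      have ih' := ih fun b hb => h b (List.mem_cons_of_mem a hb)
      calc (a :: t).prod * g = a * (t.prod * g) := by rw [List.prod_cons, mul_assoc]
        _ = a * ((-1:ℝ)^t.length • (g * t.prod)) := by rw [ih']
        _ = (-1:ℝ)^t.length • ((a * g) * t.prod) := by
              rw [mul_smul_comm, mul_assoc]
        _ = (-1:ℝ)^t.length • (-(g * (a * t.prod))) := by rw [ha, neg_mul (α := Module.End ℝ (ExteriorAlgebra ℝ V)), mul_assoc]
        _ = (-1:ℝ)^(a :: t).length • (g * (a :: t).prod) := by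
              rw [List.length_cons, List.prod_cons, pow_succ, mul_neg_one, neg_smul (M := Module.End ℝ (ExteriorAlgebra ℝ V)),
                smul_neg]

end Aux

theorem supertrace_id_vanishes
    (V : Type*) [NormedAddCommGroup V] [InnerProductSpace ℝ V] [FiniteDimensional ℝ V]
    (n : ℕ) (hn : 1 ≤ n) (e : OrthonormalBasis (Fin n) ℝ V) :
    LinearMap.trace ℝ (ExteriorAlgebra ℝ V)
      ((List.ofFn fun i : Fin n =>
        (LinearMap.mulLeft ℝ (ExteriorAlgebra.ι ℝ (e i))
          - CliffordAlgebra.contractLeft (Q := (0 : QuadraticForm ℝ V))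
              (innerₛₗ ℝ (e i)) : Module.End ℝ (ExteriorAlgebra ℝ V))).prod) = 0 := by
  obtain ⟨m, rfl⟩ : ∃ m, n = m + 1 := ⟨n - 1, by omega⟩
  have horth := orthonormal_iff_ite.mp e.orthonormal
  show LinearMap.trace ℝ (ExteriorAlgebra ℝ V)
      ((List.ofFn fun i : Fin (m+1) => cOp (e i)).prod) = 0
  set c0 : Module.End ℝ (ExteriorAlgebra ℝ V) := cOp (e 0) with hc0
  set A : Module.End ℝ (ExteriorAlgebra ℝ V) := parOp with hA
  set T : Module.End ℝ (ExteriorAlgebra ℝ V) :=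
    (List.ofFn fun i : Fin m => cOp (e i.succ)).prod with hT
  have hsplit : (List.ofFn fun i : Fin (m+1) => cOp (e i)).prod = c0 * T := by
    rw [List.ofFn_succ, List.prod_cons]
  rw [hsplit]
  set P : Module.End ℝ (ExteriorAlgebra ℝ V) := c0 * T with hP
  have hc0sq : c0 * c0 = -1 := cOp_sq (by simpa using horth 0 0)
  have hA2 : A * A = 1 := parOp_sq
  have hmem : ∀ a ∈ (List.ofFn fun i : Fin m => cOp (e i.succ)), ∃ i : Fin m,
      a = cOp (e i.succ) := by
    intro a ha
    obtain ⟨i, hi⟩ := List.mem_ofFn.mp ha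
    exact ⟨i, hi.symm⟩
  have hTc0 : T * c0 = (-1:ℝ)^m • (c0 * T) := by
    have := prod_anticomm c0 (List.ofFn fun i : Fin m => cOp (e i.succ)) ?_
    · simpa [hT] using this
    · intro a ha
      obtain ⟨i, rfl⟩ := hmem a ha
      exact cOp_anticomm (by simpa [(Fin.succ_ne_zero i).symm] using horth 0 i.succ)
  have hTA : T * A = (-1:ℝ)^m • (A * T) := by
    have := prod_anticomm A (List.ofFn fun i : Fin m => cOp (e i.succ)) ?_
    · simpa [hT] using this
    · intro a ha
      obtain ⟨i, rfl⟩ := hmem a ha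
      exact cOp_parOp _
  have hAc0 : A * c0 = -(c0 * A) := parOp_anticomm _
  set U : Module.End ℝ (ExteriorAlgebra ℝ V) := c0 * A with hU
  have hU2 : U * U = 1 := by
    calc U * U = c0 * ((A * c0) * A) := by rw [hU, mul_assoc, mul_assoc]
      _ = c0 * (-(c0 * (A * A))) := by rw [hAc0, neg_mul (α := Module.End ℝ (ExteriorAlgebra ℝ V)), mul_assoc]
      _ = 1 := by rw [hA2, mul_one, mul_neg (α := Module.End ℝ (ExteriorAlgebra ℝ V)), hc0sq, neg_neg]
  have hUP : U * P = A * T := by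
    calc U * P = c0 * ((A * c0) * T) := by rw [hU, hP, mul_assoc, mul_assoc]
      _ = -(c0 * (c0 * (A * T))) := by rw [hAc0, neg_mul (α := Module.End ℝ (ExteriorAlgebra ℝ V)), mul_neg (α := Module.End ℝ (ExteriorAlgebra ℝ V)), mul_assoc]
      _ = -((c0 * c0) * (A * T)) := by rw [mul_assoc]
      _ = A * T := by rw [hc0sq, neg_mul (α := Module.End ℝ (ExteriorAlgebra ℝ V)), neg_neg, one_mul]
  have hPU : P * U = -(U * P) := by
    calc P * U = c0 * ((T * c0) * A) := by rw [hU, hP, mul_assoc, mul_assoc]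
      _ = (-1:ℝ)^m • (c0 * ((c0 * T) * A)) := by rw [hTc0, smul_mul_assoc, mul_smul_comm]
      _ = (-1:ℝ)^m • ((c0 * c0) * (T * A)) := by rw [mul_assoc, mul_assoc]
      _ = (-1:ℝ)^m • (-(T * A)) := by rw [hc0sq, neg_mul (α := Module.End ℝ (ExteriorAlgebra ℝ V)), one_mul]
      _ = (-1:ℝ)^m • (-((-1:ℝ)^m • (A * T))) := by rw [hTA]
      _ = -(((-1:ℝ)^m * (-1:ℝ)^m) • (A * T)) := by rw [smul_neg, smul_smul]
      _ = -(A * T) := by rw [← pow_add, ← two_mul, pow_mul, neg_one_sq, one_pow, one_smul]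
      _ = -(U * P) := by rw [hUP]
  have key : LinearMap.trace ℝ (ExteriorAlgebra ℝ V) P
      = -(LinearMap.trace ℝ (ExteriorAlgebra ℝ V) P) := by
    conv_lhs => rw [show P = U * (U * P) by rw [← mul_assoc, hU2, one_mul]]
    rw [LinearMap.trace_mul_comm, mul_assoc, hPU, mul_neg (α := Module.End ℝ (ExteriorAlgebra ℝ V)), ← mul_assoc, hU2, one_mul,
      map_neg]
  linarith
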